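/- For the pause extension R_p with pause start T_e and pause length Δ_p, every computed completion time avoids the pause interval: for every j,k, either R_p(j,k) ≤ T_e, or the start time ∘R(j,k) of the operation satisfies ∘R(j,k) ≥ T_e + Δ_p, or R_p(j,k) ≥ T_e + Δ_p. In particular no operation both starts at or before T_e and finishes strictly inside the interval (T_e, T_e+Δ_p]. -/
import Mathlib


/-- Completion times computed by the pause extension `R_p` avoid the pause
interval `(T_e, T_e + Δ_p]`: every operation either finishes by `T_e`, or
starts at or after `T_e + Δ_p`, or finishes at or after `T_e + Δ_p`; in
particular no operation starts at or before `T_e` and finishes strictly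
inside `(T_e, T_e + Δ_p]`. -/
theorem flow_shop_pause_avoids_interval
    (n m Te Δp : ℕ) (hn : 1 ≤ n) (hm : 1 ≤ m)
    (p : ℕ → ℕ → ℕ) (R S : ℕ → ℕ → ℕ)
    (hS11 : S 1 1 = 0)
    (hS1k : ∀ k, 1 < k → k ≤ m → S 1 k = R 1 (k - 1))
    (hSj1 : ∀ j, 1 < j → j ≤ n → S j 1 = R (j - 1) 1)
    (hSjk : ∀ j k, 1 < j → j ≤ n → 1 < k → k ≤ m →
      S j k = max (R (j - 1) k) (R j (k - 1)))
    (hR : ∀ j k, 1 ≤ j → j ≤ n → 1 ≤ k → k ≤ m →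
      R j k = if S j k + p j k ≤ Te then S j k + p j k
        else if Te < S j k then S j k + p j k
        else Te + Δp + p j k) :
    (∀ j k, 1 ≤ j → j ≤ n → 1 ≤ k → k ≤ m →
      R j k ≤ Te ∨ Te + Δp ≤ S j k ∨ Te + Δp ≤ R j k) ∧
    (∀ j k, 1 ≤ j → j ≤ n → 1 ≤ k → k ≤ m →
      ¬(S j k ≤ Te ∧ Te < R j k ∧ R j k ≤ Te + Δp)) := by
  -- Strengthened claim proved by strong induction on j + k:
  -- every start and completion value avoids the open-closed pause interval.
  have hSkey : ∀ N j k, 1 ≤ j → j ≤ n → 1 ≤ k → k ≤ m → j + k ≤ N →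
      (S j k ≤ Te ∨ Te + Δp ≤ S j k) ∧ (R j k ≤ Te ∨ Te + Δp ≤ R j k) := by
    intro N
    induction N with
    | zero => intro j k h1 _ h3 _ hN; omega
    | succ N ih =>
      intro j k h1 h2 h3 h4 hN
      have hS : S j k ≤ Te ∨ Te + Δp ≤ S j k := by
        rcases eq_or_lt_of_le h1 with hj | hj
        · rcases eq_or_lt_of_le h3 with hk | hk
          · rw [← hj, ← hk, hS11]; left; omega
          · rw [← hj, hS1k k hk h4]
            have := (ih 1 (k - 1) le_rfl hn (by omega) (by omega) (by omega)).2
            exact this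
        · rcases eq_or_lt_of_le h3 with hk | hk
          · rw [← hk, hSj1 j hj h2]
            exact (ih (j - 1) 1 (by omega) (by omega) le_rfl hm (by omega)).2
          · rw [hSjk j k hj h2 hk h4]
            have ha := (ih (j - 1) k (by omega) (by omega) h3 h4 (by omega)).2
            have hb := (ih j (k - 1) h1 h2 (by omega) (by omega) (by omega)).2
            rcases ha with ha | ha
            · rcases hb with hb | hb
              · exact Or.inl (max_le ha hb)
              · exact Or.inr (le_trans hb (le_max_right _ _))
            · exact Or.inr (le_trans ha (le_max_left _ _))
      refine ⟨hS, ?_⟩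
      rw [hR j k h1 h2 h3 h4]
      split_ifs with hc1 hc2 <;> omega
  constructor
  · intro j k h1 h2 h3 h4
    rcases (hSkey (j + k) j k h1 h2 h3 h4 le_rfl).2 with h | h
    · exact Or.inl h
    · exact Or.inr (Or.inr h)
  · intro j k h1 h2 h3 h4 ⟨ha, hb, hc⟩
    have hRjk := hR j k h1 h2 h3 h4
    split_ifs at hRjk <;> omega
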